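/- arXiv:2312.15168 — 2 statements merged into one kernel-verified Lean document; each statement's English description precedes it below -/
import Mathlib

section
/- The function 𝐃² has the following properties: (a) 𝐃(X,T)² > 0 whenever (X,T) ≠ (0,0); (b) there exist constants 0 < c ≤ C such that c·(|X|² + |T|) ≤ 𝐃(X,T)² ≤ C·(|X|² + |T|) for all X ∈ ℝ², T ∈ ℝ³; (c) for every h > 0 and all (X,T), 𝐃(X/√h, T/h)² = 𝐃(X,T)²/h; (d) the map (X,T) ↦ 𝐃(X,T)² is continuous on ℝ² × ℝ³. -/
open Real MeasureTheory Asymptotics Filter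
open Pointwise

noncomputable section
open scoped Classical

/-- Euclidean norm on `ℝ³`. -/
def nrm3 (v : Fin 3 → ℝ) : ℝ := Real.sqrt (v 0 ^ 2 + v 1 ^ 2 + v 2 ^ 2)

/-- Euclidean inner product on `ℝ³`. -/
def dot3 (v w : Fin 3 → ℝ) : ℝ := v 0 * w 0 + v 1 * w 1 + v 2 * w 2

/-- `Υ(r) = r²·sin r/(sin r − r·cos r)` with `Υ(0) := 3`. -/
def Ups (r : ℝ) : ℝ :=
  if r = 0 then 3 else r ^ 2 * Real.sin r / (Real.sin r - r * Real.cos r)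

/-- The squared "intrinsic distance" `𝐃(X,T)² = sup{Υ(|τ|)|X|² + 4T·τ : |τ| < ϑ₁}`. -/
def Dsq (ϑ : ℝ) (X : ℝ × ℝ) (T : Fin 3 → ℝ) : ℝ :=
  sSup ((fun τ : Fin 3 → ℝ => Ups (nrm3 τ) * (X.1 ^ 2 + X.2 ^ 2) + 4 * dot3 T τ) ''
    {τ | nrm3 τ < ϑ})

lemma nrm3_nonneg (v : Fin 3 → ℝ) : 0 ≤ nrm3 v := Real.sqrt_nonneg _

lemma nrm3_sq (v : Fin 3 → ℝ) : nrm3 v ^ 2 = v 0 ^ 2 + v 1 ^ 2 + v 2 ^ 2 :=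
  Real.sq_sqrt (by positivity)

lemma nrm3_zero : nrm3 (0 : Fin 3 → ℝ) = 0 := by simp [nrm3]

lemma nrm3_pos {v : Fin 3 → ℝ} (hv : v ≠ 0) : 0 < nrm3 v := by
  rcases (nrm3_nonneg v).lt_or_eq with h | h
  · exact h
  · exfalso; apply hv
    have h2 : v 0 ^ 2 + v 1 ^ 2 + v 2 ^ 2 = 0 := by
      have := nrm3_sq v; rw [← h] at this; linarith [this]
    funext i
    fin_cases i <;> simp <;> nlinarith [sq_nonneg (v 0), sq_nonneg (v 1), sq_nonneg (v 2)]

lemma abs_dot3_le (v w : Fin 3 → ℝ) : |dot3 v w| ≤ nrm3 v * nrm3 w := by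
  have h1 : |dot3 v w| = Real.sqrt ((dot3 v w) ^ 2) := (Real.sqrt_sq_eq_abs _).symm
  have h2 : nrm3 v * nrm3 w
      = Real.sqrt ((v 0 ^ 2 + v 1 ^ 2 + v 2 ^ 2) * (w 0 ^ 2 + w 1 ^ 2 + w 2 ^ 2)) := by
    rw [Real.sqrt_mul (by positivity)]; rfl
  rw [h1, h2]
  apply Real.sqrt_le_sqrt
  unfold dot3
  nlinarith [sq_nonneg (v 0 * w 1 - v 1 * w 0), sq_nonneg (v 0 * w 2 - v 2 * w 0),
    sq_nonneg (v 1 * w 2 - v 2 * w 1)]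

lemma dot3_le (v w : Fin 3 → ℝ) : dot3 v w ≤ nrm3 v * nrm3 w :=
  (le_abs_self _).trans (abs_dot3_le v w)

lemma nrm3_smul (c : ℝ) (v : Fin 3 → ℝ) : nrm3 (fun i => c * v i) = |c| * nrm3 v := by
  unfold nrm3
  rw [show (c * v 0) ^ 2 + (c * v 1) ^ 2 + (c * v 2) ^ 2
      = c ^ 2 * (v 0 ^ 2 + v 1 ^ 2 + v 2 ^ 2) by ring,
    Real.sqrt_mul (sq_nonneg c), Real.sqrt_sq_eq_abs]

lemma nrm3_sub_bound {v w : Fin 3 → ℝ} {d : ℝ} (hd : 0 ≤ d)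
    (h0 : |v 0 - w 0| ≤ d) (h1 : |v 1 - w 1| ≤ d) (h2 : |v 2 - w 2| ≤ d) :
    nrm3 (fun i => v i - w i) ≤ 2 * d := by
  have : nrm3 (fun i => v i - w i) ≤ Real.sqrt ((2*d) ^ 2) := by
    apply Real.sqrt_le_sqrt
    have e0 := sq_abs (v 0 - w 0); have e1 := sq_abs (v 1 - w 1); have e2 := sq_abs (v 2 - w 2)
    simp only []
    nlinarith [abs_nonneg (v 0 - w 0), abs_nonneg (v 1 - w 1), abs_nonneg (v 2 - w 2)]
  rwa [Real.sqrt_sq (by linarith)] at this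

lemma nrm3_triangle' (v u : Fin 3 → ℝ) : nrm3 v ≤ nrm3 u + nrm3 (fun i => v i - u i) := by
  set w : Fin 3 → ℝ := fun i => v i - u i with hw
  have hds : dot3 u w ≤ nrm3 u * nrm3 w := dot3_le u w
  have : nrm3 v ≤ Real.sqrt ((nrm3 u + nrm3 w) ^ 2) := by
    apply Real.sqrt_le_sqrt
    have h1 := nrm3_sq u; have h2 := nrm3_sq w
    have hv0 : v 0 = u 0 + w 0 := by simp [hw]
    have hv1 : v 1 = u 1 + w 1 := by simp [hw]
    have hv2 : v 2 = u 2 + w 2 := by simp [hw]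
    rw [hv0, hv1, hv2]
    unfold dot3 at hds
    nlinarith
  rwa [Real.sqrt_sq (by have := nrm3_nonneg u; have := nrm3_nonneg w; linarith)] at this

lemma g_hasDeriv (r : ℝ) :
    HasDerivAt (fun x => Real.sin x - x * Real.cos x) (r * Real.sin r) r := by
  have h := (Real.hasDerivAt_sin r).sub ((hasDerivAt_id r).mul (Real.hasDerivAt_cos r))
  refine h.congr_deriv ?_
  simp only [id_eq]
  ring

lemma f_hasDeriv (r : ℝ) :
    HasDerivAt (fun x => 3 * Real.sin x - 3 * x * Real.cos x - x ^ 2 * Real.sin x)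
      (r * (Real.sin r - r * Real.cos r)) r := by
  have h := (((Real.hasDerivAt_sin r).const_mul 3).sub
      (((hasDerivAt_id r).const_mul 3).mul (Real.hasDerivAt_cos r))).sub
      (((hasDerivAt_pow 2 r)).mul (Real.hasDerivAt_sin r))
  refine h.congr_deriv ?_
  simp only [id_eq]
  ring

lemma sin_neg_of_mem (r : ℝ) (h1 : Real.pi < r) (h2 : r < 3 * Real.pi / 2) : Real.sin r < 0 := by
  have : Real.sin (r - Real.pi) > 0 :=
    Real.sin_pos_of_pos_of_lt_pi (by linarith) (by nlinarith [Real.pi_pos])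
  rw [Real.sin_sub_pi] at this; linarith

lemma g_pos_on_Ioc (r : ℝ) (h1 : 0 < r) (h2 : r ≤ Real.pi) :
    0 < Real.sin r - r * Real.cos r := by
  have hmono : StrictMonoOn (fun x => Real.sin x - x * Real.cos x) (Set.Icc 0 Real.pi) := by
    apply strictMonoOn_of_deriv_pos (convex_Icc 0 Real.pi)
    · exact (Real.continuous_sin.sub (continuous_id.mul Real.continuous_cos)).continuousOn
    · intro x hx
      rw [interior_Icc] at hx
      rw [(g_hasDeriv x).deriv]
      exact mul_pos hx.1 (Real.sin_pos_of_pos_of_lt_pi hx.1 hx.2)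
  have := hmono (Set.mem_Icc.2 ⟨le_refl 0, Real.pi_pos.le⟩)
    (Set.mem_Icc.2 ⟨h1.le, h2⟩) h1
  simpa using this

lemma g_theta_eq {ϑ : ℝ} (hϑ : ϑ ∈ Set.Ioo Real.pi (3 * Real.pi / 2))
    (hϑtan : Real.tan ϑ = ϑ) : Real.sin ϑ - ϑ * Real.cos ϑ = 0 := by
  have hcos : Real.cos ϑ < 0 := by
    apply Real.cos_neg_of_pi_div_two_lt_of_lt
    · linarith [hϑ.1, Real.pi_pos]
    · have := hϑ.2; linarith
  rw [Real.tan_eq_sin_div_cos, div_eq_iff (ne_of_lt hcos)] at hϑtan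
  linarith

lemma g_pos {ϑ : ℝ} (hϑ : ϑ ∈ Set.Ioo Real.pi (3 * Real.pi / 2))
    (hϑtan : Real.tan ϑ = ϑ) (r : ℝ) (h1 : 0 < r) (h2 : r < ϑ) :
    0 < Real.sin r - r * Real.cos r := by
  rcases le_or_gt r Real.pi with h | h
  · exact g_pos_on_Ioc r h1 h
  · have hanti : StrictAntiOn (fun x => Real.sin x - x * Real.cos x) (Set.Icc Real.pi ϑ) := by
      apply strictAntiOn_of_deriv_neg (convex_Icc _ _)
      · exact (Real.continuous_sin.sub (continuous_id.mul Real.continuous_cos)).continuousOn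
      · intro x hx
        rw [interior_Icc] at hx
        rw [(g_hasDeriv x).deriv]
        have hsx : Real.sin x < 0 := sin_neg_of_mem x hx.1 (lt_trans hx.2 hϑ.2)
        have : 0 < x := lt_trans Real.pi_pos hx.1
        nlinarith
    have := hanti (Set.mem_Icc.2 ⟨h.le, h2.le⟩)
      (Set.mem_Icc.2 ⟨(lt_trans h h2).le.trans (le_refl _) |>.trans (le_refl _), le_refl _⟩) h2
    have hg := g_theta_eq hϑ hϑtan
    simp only [hg] at this
    simpa using this

lemma f_nonneg (r : ℝ) (h1 : 0 ≤ r) (h2 : r ≤ Real.pi) :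
    0 ≤ 3 * Real.sin r - 3 * r * Real.cos r - r ^ 2 * Real.sin r := by
  have hmono : MonotoneOn (fun x => 3 * Real.sin x - 3 * x * Real.cos x - x ^ 2 * Real.sin x)
      (Set.Icc 0 Real.pi) := by
    apply monotoneOn_of_deriv_nonneg (convex_Icc 0 Real.pi)
    · apply Continuous.continuousOn; continuity
    · intro x hx
      exact ((f_hasDeriv x).differentiableAt).differentiableWithinAt
    · intro x hx
      rw [interior_Icc] at hx
      rw [(f_hasDeriv x).deriv]
      exact mul_nonneg hx.1.le (g_pos_on_Ioc x hx.1 hx.2.le).le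
  have := hmono (Set.mem_Icc.2 ⟨le_refl 0, Real.pi_pos.le⟩) (Set.mem_Icc.2 ⟨h1, h2⟩) h1
  simpa using this


lemma Ups_zero : Ups 0 = 3 := if_pos rfl

lemma Ups_pi : Ups Real.pi = 0 := by
  rw [Ups, if_neg (ne_of_gt Real.pi_pos)]
  simp [Real.sin_pi]

lemma Ups_le_three {ϑ : ℝ} (hϑ : ϑ ∈ Set.Ioo Real.pi (3 * Real.pi / 2))
    (hϑtan : Real.tan ϑ = ϑ) (r : ℝ) (h1 : 0 ≤ r) (h2 : r < ϑ) : Ups r ≤ 3 := by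
  rcases eq_or_lt_of_le h1 with h | h
  · rw [← h, Ups_zero]
  · rw [Ups, if_neg (ne_of_gt h)]
    have hg := g_pos hϑ hϑtan r h h2
    rcases le_or_gt r Real.pi with hle | hgt
    · rw [div_le_iff₀ hg]
      have := f_nonneg r h.le hle
      nlinarith
    · apply div_nonpos_of_nonpos_of_nonneg _ hg.le |>.trans (by norm_num)
      have hs : Real.sin r < 0 := sin_neg_of_mem r hgt (lt_trans h2 hϑ.2)
      nlinarith

def Sset (ϑ : ℝ) (X : ℝ × ℝ) (T : Fin 3 → ℝ) : Set ℝ :=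
  (fun τ : Fin 3 → ℝ => Ups (nrm3 τ) * (X.1 ^ 2 + X.2 ^ 2) + 4 * dot3 T τ) '' {τ | nrm3 τ < ϑ}

lemma Dsq_eq (ϑ : ℝ) (X : ℝ × ℝ) (T : Fin 3 → ℝ) : Dsq ϑ X T = sSup (Sset ϑ X T) := rfl

section main
variable {ϑ : ℝ} (hϑ : ϑ ∈ Set.Ioo Real.pi (3 * Real.pi / 2)) (hϑtan : Real.tan ϑ = ϑ)

include hϑ in
lemma theta_pos : 0 < ϑ := lt_trans Real.pi_pos hϑ.1

include hϑ hϑtan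

omit hϑtan in
lemma Sset_nonempty (X : ℝ × ℝ) (T : Fin 3 → ℝ) : (Sset ϑ X T).Nonempty :=
  ⟨_, ⟨0, by simpa [Set.mem_setOf_eq, nrm3_zero] using theta_pos hϑ, rfl⟩⟩

lemma Sset_ub (X : ℝ × ℝ) (T : Fin 3 → ℝ) :
    ∀ a ∈ Sset ϑ X T, a ≤ 3 * (X.1 ^ 2 + X.2 ^ 2) + 4 * ϑ * nrm3 T := by
  rintro a ⟨τ, hτ, rfl⟩
  dsimp only
  have hU : Ups (nrm3 τ) ≤ 3 := Ups_le_three hϑ hϑtan _ (nrm3_nonneg τ) hτ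
  have hd : dot3 T τ ≤ nrm3 T * nrm3 τ := dot3_le T τ
  have h2 : nrm3 T * nrm3 τ ≤ nrm3 T * ϑ :=
    mul_le_mul_of_nonneg_left (le_of_lt hτ) (nrm3_nonneg T)
  have h3 : Ups (nrm3 τ) * (X.1 ^ 2 + X.2 ^ 2) ≤ 3 * (X.1 ^ 2 + X.2 ^ 2) :=
    mul_le_mul_of_nonneg_right hU (by positivity)
  nlinarith

lemma Sset_bddAbove (X : ℝ × ℝ) (T : Fin 3 → ℝ) : BddAbove (Sset ϑ X T) :=
  ⟨_, Sset_ub hϑ hϑtan X T⟩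

lemma Dsq_le (X : ℝ × ℝ) (T : Fin 3 → ℝ) :
    Dsq ϑ X T ≤ 3 * (X.1 ^ 2 + X.2 ^ 2) + 4 * ϑ * nrm3 T :=
  csSup_le (Sset_nonempty hϑ X T) (Sset_ub hϑ hϑtan X T)

lemma le_Dsq (X : ℝ × ℝ) (T : Fin 3 → ℝ) (τ : Fin 3 → ℝ) (hτ : nrm3 τ < ϑ) :
    Ups (nrm3 τ) * (X.1 ^ 2 + X.2 ^ 2) + 4 * dot3 T τ ≤ Dsq ϑ X T :=
  le_csSup (Sset_bddAbove hϑ hϑtan X T) ⟨τ, hτ, rfl⟩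

lemma Dsq_ge_X (X : ℝ × ℝ) (T : Fin 3 → ℝ) : 3 * (X.1 ^ 2 + X.2 ^ 2) ≤ Dsq ϑ X T := by
  have h := le_Dsq hϑ hϑtan X T 0 (by simpa [nrm3_zero] using theta_pos hϑ)
  have hd0 : dot3 T (0 : Fin 3 → ℝ) = 0 := by simp [dot3]
  rw [nrm3_zero, Ups_zero, hd0, mul_zero, add_zero] at h
  exact h

lemma Dsq_nonneg (X : ℝ × ℝ) (T : Fin 3 → ℝ) : 0 ≤ Dsq ϑ X T :=
  le_trans (by positivity) (Dsq_ge_X hϑ hϑtan X T)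

omit hϑ hϑtan in
lemma dot3_self_smul (c : ℝ) (T : Fin 3 → ℝ) :
    dot3 T (fun i => c * T i) = c * nrm3 T ^ 2 := by
  rw [nrm3_sq]; unfold dot3; ring

lemma Dsq_ge_rT (X : ℝ × ℝ) (T : Fin 3 → ℝ) (hX : X.1 ^ 2 + X.2 ^ 2 = 0)
    (r : ℝ) (hr0 : 0 ≤ r) (hr : r < ϑ) : 4 * r * nrm3 T ≤ Dsq ϑ X T := by
  rcases eq_or_ne T 0 with rfl | hT
  · rw [nrm3_zero, mul_zero]; exact Dsq_nonneg hϑ hϑtan X 0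
  · have hTpos := nrm3_pos hT
    set c := r / nrm3 T with hc
    have hnc : nrm3 (fun i => c * T i) = r := by
      rw [nrm3_smul, abs_of_nonneg (by positivity), hc]
      field_simp
    have := le_Dsq hϑ hϑtan X T (fun i => c * T i) (by rw [hnc]; exact hr)
    rw [hnc, hX, mul_zero, zero_add, dot3_self_smul, hc] at this
    have hdot : r / nrm3 T * nrm3 T ^ 2 = r * nrm3 T := by field_simp
    rw [hdot] at this
    linarith

lemma Dsq_ge_piT (X : ℝ × ℝ) (T : Fin 3 → ℝ) : 4 * Real.pi * nrm3 T ≤ Dsq ϑ X T := by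
  rcases eq_or_ne T 0 with rfl | hT
  · rw [nrm3_zero, mul_zero]; exact Dsq_nonneg hϑ hϑtan X 0
  · have hTpos := nrm3_pos hT
    set c := Real.pi / nrm3 T with hc
    have hnc : nrm3 (fun i => c * T i) = Real.pi := by
      rw [nrm3_smul, abs_of_nonneg (by positivity), hc]; field_simp
    have := le_Dsq hϑ hϑtan X T (fun i => c * T i) (by rw [hnc]; exact hϑ.1)
    rw [hnc, Ups_pi, zero_mul, zero_add, dot3_self_smul, hc] at this
    have hdot : Real.pi / nrm3 T * nrm3 T ^ 2 = Real.pi * nrm3 T := by field_simp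
    rw [hdot] at this
    linarith

end main

section parts
variable {ϑ : ℝ} (hϑ : ϑ ∈ Set.Ioo Real.pi (3 * Real.pi / 2)) (hϑtan : Real.tan ϑ = ϑ)
include hϑ hϑtan

lemma Dsq_lower (X : ℝ × ℝ) (T : Fin 3 → ℝ) :
    3 / 2 * (X.1 ^ 2 + X.2 ^ 2 + nrm3 T) ≤ Dsq ϑ X T := by
  have h1 := Dsq_ge_X hϑ hϑtan X T
  have h2 := Dsq_ge_piT hϑ hϑtan X T
  have hπ := Real.pi_gt_three
  have hn := nrm3_nonneg T
  nlinarith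

lemma Dsq_upper (X : ℝ × ℝ) (T : Fin 3 → ℝ) :
    Dsq ϑ X T ≤ 4 * ϑ * (X.1 ^ 2 + X.2 ^ 2 + nrm3 T) := by
  have h1 := Dsq_le hϑ hϑtan X T
  have hπ := Real.pi_gt_three
  have hϑ3 : 3 < ϑ := lt_trans hπ hϑ.1
  have hn := nrm3_nonneg T
  nlinarith [sq_nonneg X.1, sq_nonneg X.2]

lemma Dsq_pos (X : ℝ × ℝ) (T : Fin 3 → ℝ) (hXT : ¬(X = 0 ∧ T = 0)) : 0 < Dsq ϑ X T := by
  have hlow := Dsq_lower hϑ hϑtan X T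
  have hkey : 0 < X.1 ^ 2 + X.2 ^ 2 + nrm3 T := by
    rcases not_and_or.1 hXT with hX | hT
    · have : X.1 ≠ 0 ∨ X.2 ≠ 0 := by
        by_contra hc
        push_neg at hc
        exact hX (Prod.ext hc.1 hc.2)
      have hn := nrm3_nonneg T
      rcases this with h | h
      · have := pow_pos (abs_pos.2 h) 2
        rw [sq_abs] at this
        nlinarith [sq_nonneg X.2]
      · have := pow_pos (abs_pos.2 h) 2
        rw [sq_abs] at this
        nlinarith [sq_nonneg X.1]
    · have := nrm3_pos hT
      nlinarith [sq_nonneg X.1, sq_nonneg X.2]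
  linarith

omit hϑ hϑtan in
lemma Dsq_scale (h : ℝ) (hh : 0 < h) (X : ℝ × ℝ) (T : Fin 3 → ℝ) :
    Dsq ϑ (X.1 / Real.sqrt h, X.2 / Real.sqrt h) (fun i => T i / h) = Dsq ϑ X T / h := by
  have hne : h ≠ 0 := ne_of_gt hh
  have hs : Real.sqrt h ^ 2 = h := Real.sq_sqrt hh.le
  have himg : (fun τ : Fin 3 → ℝ => Ups (nrm3 τ) *
        (((X.1 / Real.sqrt h, X.2 / Real.sqrt h) : ℝ × ℝ).1 ^ 2 +
         ((X.1 / Real.sqrt h, X.2 / Real.sqrt h) : ℝ × ℝ).2 ^ 2) +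
        4 * dot3 (fun i => T i / h) τ) '' {τ | nrm3 τ < ϑ}
      = (fun y => h⁻¹ * y) ''
        ((fun τ : Fin 3 → ℝ => Ups (nrm3 τ) * (X.1 ^ 2 + X.2 ^ 2) + 4 * dot3 T τ) ''
          {τ | nrm3 τ < ϑ}) := by
    rw [Set.image_image]
    apply Set.image_congr
    intro τ _
    have hd : dot3 (fun i => T i / h) τ = dot3 T τ / h := by unfold dot3; ring
    dsimp only
    rw [hd, div_pow, div_pow, hs]
    field_simp
  have hsmul : (fun y => h⁻¹ * y) ''
      ((fun τ : Fin 3 → ℝ => Ups (nrm3 τ) * (X.1 ^ 2 + X.2 ^ 2) + 4 * dot3 T τ) ''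
        {τ | nrm3 τ < ϑ}) = h⁻¹ • ((fun τ : Fin 3 → ℝ =>
        Ups (nrm3 τ) * (X.1 ^ 2 + X.2 ^ 2) + 4 * dot3 T τ) '' {τ | nrm3 τ < ϑ}) := by
    ext y
    simp [Set.mem_smul_set, smul_eq_mul]
  show sSup _ = _
  rw [himg, hsmul, Real.sSup_smul_of_nonneg (inv_nonneg.2 hh.le), smul_eq_mul]
  rw [div_eq_inv_mul]
  rfl

end parts

lemma fdiff_eq (X X' : ℝ × ℝ) (T T' τ : Fin 3 → ℝ) :
    Ups (nrm3 τ) * (X.1 ^ 2 + X.2 ^ 2) + 4 * dot3 T τ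
      = (Ups (nrm3 τ) * (X'.1 ^ 2 + X'.2 ^ 2) + 4 * dot3 T' τ)
        + Ups (nrm3 τ) * ((X.1 ^ 2 + X.2 ^ 2) - (X'.1 ^ 2 + X'.2 ^ 2))
        + 4 * dot3 (fun i => T i - T' i) τ := by
  unfold dot3; ring

lemma est_main {X₀ X : ℝ × ℝ} {T₀ T : Fin 3 → ℝ} {δ : ℝ} (hδ0 : 0 < δ) (hδ1 : δ ≤ 1)
    (hd : dist ((X, T) : (ℝ × ℝ) × (Fin 3 → ℝ)) ((X₀, T₀)) < δ) :
    |X.1 ^ 2 + X.2 ^ 2 - (X₀.1 ^ 2 + X₀.2 ^ 2)| ≤ (2 * |X₀.1| + 2 * |X₀.2| + 2) * δ ∧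
    nrm3 (fun i => T i - T₀ i) ≤ 2 * δ ∧ nrm3 T ≤ nrm3 T₀ + 2 * δ := by
  rw [Prod.dist_eq] at hd
  have hX : dist X X₀ < δ := lt_of_le_of_lt (le_max_left _ _) hd
  have hT : dist T T₀ < δ := lt_of_le_of_lt (le_max_right _ _) hd
  rw [Prod.dist_eq] at hX
  have hX1 : |X.1 - X₀.1| ≤ δ := by
    have := le_max_left (dist X.1 X₀.1) (dist X.2 X₀.2)
    rw [Real.dist_eq] at this; linarith [lt_of_le_of_lt this hX]
  have hX2 : |X.2 - X₀.2| ≤ δ := by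
    have := le_max_right (dist X.1 X₀.1) (dist X.2 X₀.2)
    rw [Real.dist_eq] at this; linarith [lt_of_le_of_lt this hX]
  have hTi : ∀ i, |T i - T₀ i| ≤ δ := by
    intro i
    have := dist_le_pi_dist T T₀ i
    rw [Real.dist_eq] at this; linarith
  have sq_est : ∀ a b : ℝ, |a - b| ≤ δ → |a ^ 2 - b ^ 2| ≤ (2 * |b| + 1) * δ := by
    intro a b hab
    have heq : a ^ 2 - b ^ 2 = (a - b) * ((a - b) + 2 * b) := by ring
    rw [heq, abs_mul]
    have h2 : |(a - b) + 2 * b| ≤ δ + 2 * |b| := by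
      calc |(a - b) + 2 * b| ≤ |a - b| + |2 * b| := abs_add_le _ _
        _ ≤ δ + 2 * |b| := by rw [abs_mul, abs_two]; linarith
    calc |a - b| * |(a - b) + 2 * b| ≤ δ * (δ + 2 * |b|) :=
          mul_le_mul hab h2 (abs_nonneg _) hδ0.le
      _ ≤ (2 * |b| + 1) * δ := by nlinarith
  refine ⟨?_, nrm3_sub_bound hδ0.le (hTi 0) (hTi 1) (hTi 2), ?_⟩
  · have e1 := sq_est X.1 X₀.1 hX1
    have e2 := sq_est X.2 X₀.2 hX2
    calc |X.1 ^ 2 + X.2 ^ 2 - (X₀.1 ^ 2 + X₀.2 ^ 2)|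
        ≤ |X.1 ^ 2 - X₀.1 ^ 2| + |X.2 ^ 2 - X₀.2 ^ 2| := by
          have : X.1 ^ 2 + X.2 ^ 2 - (X₀.1 ^ 2 + X₀.2 ^ 2)
              = (X.1 ^ 2 - X₀.1 ^ 2) + (X.2 ^ 2 - X₀.2 ^ 2) := by ring
          rw [this]; exact abs_add_le _ _
      _ ≤ (2 * |X₀.1| + 2 * |X₀.2| + 2) * δ := by linarith
  · have := nrm3_triangle' T T₀
    have := nrm3_sub_bound hδ0.le (hTi 0) (hTi 1) (hTi 2)
    linarith

section cont
variable {ϑ : ℝ} (hϑ : ϑ ∈ Set.Ioo Real.pi (3 * Real.pi / 2)) (hϑtan : Real.tan ϑ = ϑ)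
include hϑ hϑtan

set_option maxHeartbeats 1000000 in
lemma Dsq_continuous : Continuous (fun q : (ℝ × ℝ) × (Fin 3 → ℝ) => Dsq ϑ q.1 q.2) := by
  have hϑpos : (0:ℝ) < ϑ := theta_pos hϑ
  rw [Metric.continuous_iff]
  rintro ⟨X₀, T₀⟩ ε hε
  obtain ⟨a, ⟨τh, hτh, rfl⟩, hagt⟩ :=
    exists_lt_of_lt_csSup (Sset_nonempty hϑ X₀ T₀)
      (show Dsq ϑ X₀ T₀ - ε / 2 < sSup (Sset ϑ X₀ T₀) by
        rw [← Dsq_eq]; linarith)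
  have hτhϑ : nrm3 τh < ϑ := hτh
  have hagt' : Dsq ϑ X₀ T₀ - ε / 2
      < Ups (nrm3 τh) * (X₀.1 ^ 2 + X₀.2 ^ 2) + 4 * dot3 T₀ τh := hagt
  set A := X₀.1 ^ 2 + X₀.2 ^ 2 with hA
  set B := nrm3 T₀ with hB
  set M₁ : ℝ := 2 * |X₀.1| + 2 * |X₀.2| + 2 with hM₁
  set U : ℝ := Ups (nrm3 τh) with hU
  have hM₁pos : 0 < M₁ := by rw [hM₁]; positivity
  have hBnn : 0 ≤ B := nrm3_nonneg T₀
  have hAnn : 0 ≤ A := by rw [hA]; positivity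
  set δ₁ : ℝ := min 1 (ε / (4 * (|U| * M₁ + 8 * ϑ + 1))) with hδ₁
  have hδ₁pos : 0 < δ₁ := by
    rw [hδ₁]
    exact lt_min one_pos (by positivity)
  have hδ₁1 : δ₁ ≤ 1 := by rw [hδ₁]; exact min_le_left _ _
  have hδ₁small : δ₁ * (4 * (|U| * M₁ + 8 * ϑ + 1)) ≤ ε := by
    have h := min_le_right 1 (ε / (4 * (|U| * M₁ + 8 * ϑ + 1)))
    rw [← hδ₁] at h
    have hden : (0:ℝ) < 4 * (|U| * M₁ + 8 * ϑ + 1) := by positivity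
    rw [le_div_iff₀ hden] at h
    exact h
  clear_value A B M₁ U δ₁
  have hlsc : ∀ X : ℝ × ℝ, ∀ T : Fin 3 → ℝ,
      dist ((X, T) : (ℝ × ℝ) × (Fin 3 → ℝ)) ((X₀, T₀)) < δ₁ →
      Dsq ϑ X₀ T₀ - Dsq ϑ X T < ε := by
    intro X T hd
    obtain ⟨hAd, hTd, _⟩ := est_main hδ₁pos hδ₁1 hd
    rw [← hA, ← hM₁] at hAd
    have hfl := le_Dsq hϑ hϑtan X T τh hτhϑ
    have hdec := fdiff_eq X X₀ T T₀ τh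
    rw [← hA, ← hU] at hdec
    have hdot : |dot3 (fun i => T i - T₀ i) τh| ≤ 2 * δ₁ * ϑ :=
      calc |dot3 (fun i => T i - T₀ i) τh| ≤ nrm3 (fun i => T i - T₀ i) * nrm3 τh :=
            abs_dot3_le _ _
        _ ≤ 2 * δ₁ * ϑ := mul_le_mul hTd hτhϑ.le (nrm3_nonneg _) (by linarith)
    have hUA : |U * ((X.1 ^ 2 + X.2 ^ 2) - A)| ≤ |U| * (M₁ * δ₁) := by
      rw [abs_mul]
      exact mul_le_mul_of_nonneg_left hAd (abs_nonneg U)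
    have habs1 := (abs_le.1 hUA).1
    have habs2 := (abs_le.1 hdot).1
    have hUl := neg_abs_le U
    have hfl' : U * (X.1 ^ 2 + X.2 ^ 2) + 4 * dot3 T τh ≤ Dsq ϑ X T := by
      rw [hU]; exact hfl
    linarith [hfl', hdec, habs1, habs2, hδ₁small, hδ₁pos, hagt']
  rcases eq_or_lt_of_le hAnn with hA0 | hApos
  · -- case A = 0
    set η : ℝ := min (ϑ / 2) (ε / (12 * (B + 1))) with hη
    have hηpos : 0 < η := by
      rw [hη]; exact lt_min (by linarith) (by positivity)
    have hηϑ : η ≤ ϑ / 2 := by rw [hη]; exact min_le_left _ _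
    have hηB : 4 * η * B ≤ ε / 3 := by
      have h1 : η ≤ ε / (12 * (B + 1)) := by rw [hη]; exact min_le_right _ _
      have h2 : (0:ℝ) < 12 * (B + 1) := by positivity
      rw [le_div_iff₀ h2] at h1
      nlinarith
    have hFp₀ : 4 * (ϑ - η) * B ≤ Dsq ϑ X₀ T₀ := by
      rw [hB]
      exact Dsq_ge_rT hϑ hϑtan X₀ T₀ (by rw [← hA]; exact hA0.symm) (ϑ - η)
        (by linarith) (by linarith)
    set δ₂ : ℝ := min 1 (ε / (3 * (3 * M₁ + 8 * ϑ + 1))) with hδ₂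
    have hδ₂pos : 0 < δ₂ := by rw [hδ₂]; exact lt_min one_pos (by positivity)
    have hδ₂1 : δ₂ ≤ 1 := by rw [hδ₂]; exact min_le_left _ _
    have hδ₂small : δ₂ * (3 * (3 * M₁ + 8 * ϑ + 1)) ≤ ε := by
      have h := min_le_right 1 (ε / (3 * (3 * M₁ + 8 * ϑ + 1)))
      rw [← hδ₂] at h
      have hden : (0:ℝ) < 3 * (3 * M₁ + 8 * ϑ + 1) := by positivity
      rw [le_div_iff₀ hden] at h
      exact h
    clear_value η δ₂
    refine ⟨min δ₁ δ₂, lt_min hδ₁pos hδ₂pos, ?_⟩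
    rintro ⟨X, T⟩ hd
    rw [Real.dist_eq, abs_sub_lt_iff]
    have hd1 : dist ((X, T) : (ℝ × ℝ) × (Fin 3 → ℝ)) ((X₀, T₀)) < δ₁ :=
      lt_of_lt_of_le hd (min_le_left _ _)
    have hd2 : dist ((X, T) : (ℝ × ℝ) × (Fin 3 → ℝ)) ((X₀, T₀)) < δ₂ :=
      lt_of_lt_of_le hd (min_le_right _ _)
    obtain ⟨hAd, hTd, hTn⟩ := est_main hδ₂pos hδ₂1 hd2
    rw [← hA, ← hM₁] at hAd
    rw [← hB] at hTn
    refine ⟨?_, hlsc X T hd1⟩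
    have hup := Dsq_le hϑ hϑtan X T
    have hA' : X.1 ^ 2 + X.2 ^ 2 ≤ M₁ * δ₂ := by
      have h := (abs_le.1 hAd).2
      rw [← hA0] at h
      linarith
    have hmul : 4 * ϑ * nrm3 T ≤ 4 * ϑ * (B + 2 * δ₂) :=
      mul_le_mul_of_nonneg_left hTn (by positivity)
    linarith [hup, hFp₀, hηB, hδ₂small, hδ₂pos, hA', hmul]
  · -- case A > 0
    set K : ℝ := 3 + 8 * ϑ * (B + 2) / A with hK
    have hKpos : 0 < K := by rw [hK]; positivity
    set δ₂ : ℝ := min 1 (min (A / (2 * M₁)) (ε / (2 * (K * M₁ + 8 * ϑ + 1)))) with hδ₂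
    have hδ₂pos : 0 < δ₂ := by
      rw [hδ₂]
      exact lt_min one_pos (lt_min (by positivity) (by positivity))
    have hδ₂1 : δ₂ ≤ 1 := by rw [hδ₂]; exact min_le_left _ _
    have hδ₂A : 2 * M₁ * δ₂ ≤ A := by
      have h : δ₂ ≤ A / (2 * M₁) := by
        rw [hδ₂]; exact le_trans (min_le_right _ _) (min_le_left _ _)
      rw [le_div_iff₀ (by positivity : (0:ℝ) < 2 * M₁)] at h
      linarith
    have hδ₂ε : δ₂ * (2 * (K * M₁ + 8 * ϑ + 1)) ≤ ε := by
      have h : δ₂ ≤ ε / (2 * (K * M₁ + 8 * ϑ + 1)) := by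
        rw [hδ₂]; exact le_trans (min_le_right _ _) (min_le_right _ _)
      rw [le_div_iff₀ (by positivity : (0:ℝ) < 2 * (K * M₁ + 8 * ϑ + 1))] at h
      linarith
    clear_value K δ₂
    refine ⟨min δ₁ δ₂, lt_min hδ₁pos hδ₂pos, ?_⟩
    rintro ⟨X, T⟩ hd
    rw [Real.dist_eq, abs_sub_lt_iff]
    have hd1 : dist ((X, T) : (ℝ × ℝ) × (Fin 3 → ℝ)) ((X₀, T₀)) < δ₁ :=
      lt_of_lt_of_le hd (min_le_left _ _)
    have hd2 : dist ((X, T) : (ℝ × ℝ) × (Fin 3 → ℝ)) ((X₀, T₀)) < δ₂ :=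
      lt_of_lt_of_le hd (min_le_right _ _)
    obtain ⟨hAd, hTd, hTn⟩ := est_main hδ₂pos hδ₂1 hd2
    rw [← hA, ← hM₁] at hAd
    rw [← hB] at hTn
    have hA'lb : A / 2 ≤ X.1 ^ 2 + X.2 ^ 2 := by
      have h1 := (abs_le.1 hAd).1
      linarith [hδ₂A]
    have hTnB : nrm3 T ≤ B + 2 := by linarith
    refine ⟨?_, hlsc X T hd1⟩
    have hbound : ∀ a ∈ Sset ϑ X T, a ≤ Dsq ϑ X₀ T₀ + (K * M₁ + 8 * ϑ) * δ₂ := by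
      rintro a ⟨τ, hτ, rfl⟩
      dsimp only
      have hτϑ : nrm3 τ < ϑ := hτ
      by_cases hf : Ups (nrm3 τ) * (X.1 ^ 2 + X.2 ^ 2) + 4 * dot3 T τ ≤ Dsq ϑ X₀ T₀
      · have : 0 ≤ (K * M₁ + 8 * ϑ) * δ₂ := by positivity
        linarith
      · push_neg at hf
        have hF0 : 0 ≤ Dsq ϑ X₀ T₀ := Dsq_nonneg hϑ hϑtan X₀ T₀
        have hdotT2 : dot3 T τ ≤ (B + 2) * ϑ :=
          calc dot3 T τ ≤ nrm3 T * nrm3 τ := dot3_le T τ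
            _ ≤ (B + 2) * ϑ :=
              mul_le_mul hTnB hτϑ.le (nrm3_nonneg _) (by linarith)
        have hUbd : |Ups (nrm3 τ)| ≤ K := by
          rcases le_or_gt 0 (Ups (nrm3 τ)) with hU0 | hU0
          · rw [abs_of_nonneg hU0, hK]
            have h3 := Ups_le_three hϑ hϑtan (nrm3 τ) (nrm3_nonneg τ) hτϑ
            have hpos : (0:ℝ) ≤ 8 * ϑ * (B + 2) / A := by positivity
            linarith
          · rw [abs_of_neg hU0]
            have h1 : -(4 * (B + 2) * ϑ) < Ups (nrm3 τ) * (X.1 ^ 2 + X.2 ^ 2) := by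
              linarith [hf, hdotT2, hF0]
            have h3 : -Ups (nrm3 τ) * (A / 2) ≤ -Ups (nrm3 τ) * (X.1 ^ 2 + X.2 ^ 2) :=
              mul_le_mul_of_nonneg_left hA'lb (by linarith)
            have h4 : -Ups (nrm3 τ) ≤ 8 * ϑ * (B + 2) / A := by
              rw [le_div_iff₀ hApos]
              linarith [h1, h3]
            rw [hK]
            linarith
        have hdec := fdiff_eq X X₀ T T₀ τ
        rw [← hA] at hdec
        have hel := le_Dsq hϑ hϑtan X₀ T₀ τ hτϑ
        have hel' : Ups (nrm3 τ) * A + 4 * dot3 T₀ τ ≤ Dsq ϑ X₀ T₀ := by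
          rw [hA]; exact hel
        have hdot : |dot3 (fun i => T i - T₀ i) τ| ≤ 2 * δ₂ * ϑ :=
          calc |dot3 (fun i => T i - T₀ i) τ| ≤ nrm3 (fun i => T i - T₀ i) * nrm3 τ :=
                abs_dot3_le _ _
            _ ≤ 2 * δ₂ * ϑ := mul_le_mul hTd hτϑ.le (nrm3_nonneg _) (by linarith)
        have hUA : |Ups (nrm3 τ) * ((X.1 ^ 2 + X.2 ^ 2) - A)| ≤ K * (M₁ * δ₂) := by
          rw [abs_mul]
          exact mul_le_mul hUbd hAd (abs_nonneg _) hKpos.le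
        have h1 := (abs_le.1 hUA).2
        have h2 := (abs_le.1 hdot).2
        linarith [hdec, hel', h1, h2]
    have hFp : Dsq ϑ X T ≤ Dsq ϑ X₀ T₀ + (K * M₁ + 8 * ϑ) * δ₂ :=
      csSup_le (Sset_nonempty hϑ X T) hbound
    linarith [hFp, hδ₂ε, hδ₂pos]

end cont


/-- positivity, two-sided equivalence with `|X|² + |T|`, the scaling
property, and continuity of `(X,T) ↦ 𝐃(X,T)²`. -/
theorem statement8 (ϑ : ℝ) (hϑ : ϑ ∈ Set.Ioo Real.pi (3 * Real.pi / 2)) (hϑtan : Real.tan ϑ = ϑ) :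
    (∀ (X : ℝ × ℝ) (T : Fin 3 → ℝ), ¬(X = 0 ∧ T = 0) → 0 < Dsq ϑ X T) ∧
    (∃ c C : ℝ, 0 < c ∧ c ≤ C ∧
      ∀ (X : ℝ × ℝ) (T : Fin 3 → ℝ),
        c * (X.1 ^ 2 + X.2 ^ 2 + nrm3 T) ≤ Dsq ϑ X T ∧
          Dsq ϑ X T ≤ C * (X.1 ^ 2 + X.2 ^ 2 + nrm3 T)) ∧
    (∀ h : ℝ, 0 < h → ∀ (X : ℝ × ℝ) (T : Fin 3 → ℝ),
      Dsq ϑ (X.1 / Real.sqrt h, X.2 / Real.sqrt h) (fun i => T i / h) = Dsq ϑ X T / h) ∧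
    Continuous (fun q : (ℝ × ℝ) × (Fin 3 → ℝ) => Dsq ϑ q.1 q.2) := by
  refine ⟨fun X T h => Dsq_pos hϑ hϑtan X T h,
    ⟨3 / 2, 4 * ϑ, by norm_num, ?_,
      fun X T => ⟨Dsq_lower hϑ hϑtan X T, Dsq_upper hϑ hϑtan X T⟩⟩,
    fun h hh X T => Dsq_scale h hh X T,
    Dsq_continuous hϑ hϑtan⟩
  have : (3:ℝ) < Real.pi := Real.pi_gt_three
  have := hϑ.1
  linarith
end
end

section
/- For every r > 0, one has h(r) := r² + r·sin r·cos r − 2·sin² r > 0. -/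
open Real

lemma nonneg_of_deriv (f f' : ℝ → ℝ) (hd : ∀ x, HasDerivAt f (f' x) x)
    (h0 : f 0 = 0) (hf' : ∀ x, 0 ≤ x → 0 ≤ f' x) : ∀ x, 0 ≤ x → 0 ≤ f x := by
  intro x hx
  have hmono : MonotoneOn f (Set.Ici (0:ℝ)) := by
    apply monotoneOn_of_deriv_nonneg (convex_Ici 0)
    · exact fun y _ => (hd y).continuousAt.continuousWithinAt
    · exact fun y _ => (hd y).differentiableAt.differentiableWithinAt
    · intro y hy
      rw [interior_Ici] at hy
      rw [(hd y).deriv]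
      exact hf' y (le_of_lt hy)
  have := hmono (Set.self_mem_Ici) (Set.mem_Ici.mpr hx) hx
  rwa [h0] at this

lemma l1 : ∀ x : ℝ, 0 ≤ x → 0 ≤ x - Real.sin x := by
  apply nonneg_of_deriv _ (fun x => 1 - Real.cos x)
  · intro x
    exact (hasDerivAt_id x).sub (Real.hasDerivAt_sin x)
  · simp
  · intro x _; nlinarith [Real.cos_le_one x]

lemma l2 : ∀ x : ℝ, 0 ≤ x → 0 ≤ Real.cos x - 1 + x ^ 2 / 2 := by
  apply nonneg_of_deriv _ (fun x => x - Real.sin x)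
  · intro x
    have := ((Real.hasDerivAt_cos x).sub_const 1).add ((hasDerivAt_pow 2 x).div_const 2)
    convert this using 1
    rfl
    rfl
    rfl
    push_cast; ring
  · norm_num
  · exact l1

lemma l3 : ∀ x : ℝ, 0 ≤ x → 0 ≤ Real.sin x - x + x ^ 3 / 6 := by
  apply nonneg_of_deriv _ (fun x => Real.cos x - 1 + x ^ 2 / 2)
  · intro x
    have := (((Real.hasDerivAt_sin x).sub (hasDerivAt_id x)).add ((hasDerivAt_pow 3 x).div_const 6))
    convert this using 1
    rfl
    rfl
    rfl
    push_cast; ring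
  · norm_num
  · exact l2

lemma l4 : ∀ x : ℝ, 0 ≤ x → 0 ≤ 1 - x ^ 2 / 2 + x ^ 4 / 24 - Real.cos x := by
  apply nonneg_of_deriv _ (fun x => Real.sin x - x + x ^ 3 / 6)
  · intro x
    have := ((((hasDerivAt_const x (1:ℝ)).sub ((hasDerivAt_pow 2 x).div_const 2)).add
      ((hasDerivAt_pow 4 x).div_const 24)).sub (Real.hasDerivAt_cos x))
    convert this using 1
    rfl
    rfl
    rfl
    push_cast; ring
  · norm_num
  · exact l3

lemma l5 : ∀ x : ℝ, 0 ≤ x → 0 ≤ x - x ^ 3 / 6 + x ^ 5 / 120 - Real.sin x := by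
  apply nonneg_of_deriv _ (fun x => 1 - x ^ 2 / 2 + x ^ 4 / 24 - Real.cos x)
  · intro x
    have := ((((hasDerivAt_id x).sub ((hasDerivAt_pow 3 x).div_const 6)).add
      ((hasDerivAt_pow 5 x).div_const 120)).sub (Real.hasDerivAt_sin x))
    convert this using 1
    rfl
    rfl
    rfl
    push_cast; ring
  · norm_num
  · exact l4

lemma l6 : ∀ x : ℝ, 0 ≤ x → 0 ≤ Real.cos x - (1 - x ^ 2 / 2 + x ^ 4 / 24 - x ^ 6 / 720) := by
  apply nonneg_of_deriv _ (fun x => x - x ^ 3 / 6 + x ^ 5 / 120 - Real.sin x)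
  · intro x
    have := (Real.hasDerivAt_cos x).sub
      (((((hasDerivAt_const x (1:ℝ)).sub ((hasDerivAt_pow 2 x).div_const 2)).add
        ((hasDerivAt_pow 4 x).div_const 24)).sub ((hasDerivAt_pow 6 x).div_const 720)))
    convert this using 1
    rfl
    rfl
    rfl
    push_cast; ring
  · norm_num
  · exact l5

lemma l7 : ∀ x : ℝ, 0 ≤ x → 0 ≤ Real.sin x - (x - x ^ 3 / 6 + x ^ 5 / 120 - x ^ 7 / 5040) := by
  apply nonneg_of_deriv _ (fun x => Real.cos x - (1 - x ^ 2 / 2 + x ^ 4 / 24 - x ^ 6 / 720))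
  · intro x
    have := (Real.hasDerivAt_sin x).sub
      (((((hasDerivAt_id x).sub ((hasDerivAt_pow 3 x).div_const 6)).add
        ((hasDerivAt_pow 5 x).div_const 120)).sub ((hasDerivAt_pow 7 x).div_const 5040)))
    convert this using 1
    rfl
    rfl
    rfl
    push_cast; ring
  · norm_num
  · exact l6

/-- for every `r > 0`, `h(r) := r² + r·sin r·cos r − 2·sin² r > 0`. -/
theorem statement13 :
    ∀ r : ℝ, 0 < r → 0 < r ^ 2 + r * Real.sin r * Real.cos r - 2 * Real.sin r ^ 2 := by
  intro r hr
  have hs : Real.sin (2 * r) = 2 * Real.sin r * Real.cos r := Real.sin_two_mul r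
  have hc : Real.cos (2 * r) = 2 * Real.cos r ^ 2 - 1 := Real.cos_two_mul r
  have hpyth : Real.sin r ^ 2 + Real.cos r ^ 2 = 1 := Real.sin_sq_add_cos_sq r
  rcases le_or_gt r 1.7 with hle | hgt
  · have h2r : (0:ℝ) ≤ 2 * r := by linarith
    have hsin := l7 (2 * r) h2r
    have hcos := l6 (2 * r) h2r
    nlinarith [mul_nonneg hr.le hsin, mul_pos (pow_pos hr 6) (by nlinarith : (0:ℝ) < 7 - 2 * r ^ 2),
      pow_pos hr 2, pow_pos hr 4]
  · have h1 := Real.neg_one_le_sin (2 * r)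
    have h2 := Real.sin_sq_le_one r
    nlinarith
end
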